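/- arXiv:1109.0579 — 2 statements merged into one kernel-verified Lean document; each statement's English description precedes it below -/
import Mathlib

section
/- Let Λ be a full-rank lattice in ℂⁿ and let H be a positive semidefinite Hermitian n×n complex matrix with kernel Σ = {v ∈ ℂⁿ : Hv = 0}, a complex subspace of complex dimension n−m with m < n. Assume Σ is ℚ-defined modulo Λ, i.e. Σ is spanned over ℝ by Σ ∩ span_ℚ(Λ) (equivalently, Λ ∩ Σ is a full-rank lattice in Σ). Then there exist a surjective ℂ-linear map f : ℂⁿ → ℂᵐ with kernel exactly Σ, such that Λ' := f(Λ) is a full-rank lattice in ℂᵐ, and a positive definite Hermitian m×m matrix H' such that x*Hx = (f x)*H'(f x) for all x ∈ ℂⁿ, i.e. H is the pullback of H' under f. -/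
open Matrix
open scoped ComplexOrder
open Submodule

theorem aux_denom {E : Type*} [AddCommGroup E] [Module ℚ E] (S : Set E) {x : E}
    (hx : x ∈ Submodule.span ℚ S) :
    ∃ d : ℤ, d ≠ 0 ∧ d • x ∈ Submodule.span ℤ S := by
  have h1 : ∀ (d : ℤ) (y : E), d • y = ((d : ℚ)) • y := fun d y =>
    (Int.cast_smul_eq_zsmul ℚ d y).symm
  induction hx using Submodule.span_induction with
  | mem x h => exact ⟨1, one_ne_zero, by simpa using Submodule.subset_span h⟩
  | zero => exact ⟨1, one_ne_zero, by simp⟩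
  | add x y _ _ ihx ihy =>
      obtain ⟨a, ha, hax⟩ := ihx
      obtain ⟨b, hb, hbx⟩ := ihy
      refine ⟨a * b, mul_ne_zero ha hb, ?_⟩
      have : (a * b) • (x + y) = b • (a • x) + a • (b • y) := by
        rw [smul_add, smul_smul, smul_smul, mul_comm b a]
      rw [this]
      exact Submodule.add_mem _ (Submodule.smul_mem _ _ hax) (Submodule.smul_mem _ _ hbx)
  | smul q x _ ih =>
      obtain ⟨a, ha, hax⟩ := ih
      refine ⟨q.den * a, mul_ne_zero (Int.natCast_ne_zero.mpr q.den_nz) ha, ?_⟩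
      have : ((q.den : ℤ) * a) • (q • x) = q.num • (a • x) := by
        simp only [h1]
        rw [smul_smul, smul_smul]
        congr 1
        push_cast
        rw [mul_right_comm]
        congr 1
        rw [mul_comm, Rat.mul_den_eq_num]
      rw [this]
      exact Submodule.smul_mem _ _ hax

theorem aux_quad {n : ℕ} (H : Matrix (Fin n) (Fin n) ℂ) (hH : H.IsHermitian)
    (u w : Fin n → ℂ) (hw : H *ᵥ w = 0) :
    star (u + w) ⬝ᵥ H *ᵥ (u + w) = star u ⬝ᵥ H *ᵥ u := by
  have hcross : star w ⬝ᵥ H *ᵥ u = 0 := by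
    rw [dotProduct_mulVec, ← hH.eq, ← star_mulVec, hw]
    simp
  rw [star_add, mulVec_add, add_dotProduct, dotProduct_add, dotProduct_add, hw]
  simp [hcross]

theorem aux_lattice (n m : ℕ) (hm : m < n)
    (Λ : AddSubgroup (Fin n → ℂ)) [DiscreteTopology Λ]
    (hspan : Submodule.span ℝ (Λ : Set (Fin n → ℂ)) = ⊤)
    (V : Submodule ℂ (Fin n → ℂ))
    (hdim : Module.finrank ℂ V = n - m)
    (hQ : Submodule.span ℝ ((V : Set (Fin n → ℂ)) ∩
        (Submodule.span ℚ (Λ : Set (Fin n → ℂ)) : Set (Fin n → ℂ)))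
      = V.restrictScalars ℝ)
    (f : (Fin n → ℂ) →ₗ[ℂ] (Fin m → ℂ)) (hsurj : Function.Surjective f)
    (hker : LinearMap.ker f = V) :
    DiscreteTopology ↥(Λ.map f.toAddMonoidHom) ∧
      Submodule.span ℝ ((Λ.map f.toAddMonoidHom : AddSubgroup (Fin m → ℂ)) : Set (Fin m → ℂ)) = ⊤ := by
  classical
  set Lz : Submodule ℤ (Fin n → ℂ) := AddSubgroup.toIntSubmodule Λ with hLz
  have hLzcoe : (Lz : Set (Fin n → ℂ)) = (Λ : Set (Fin n → ℂ)) :=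
    AddSubgroup.coe_toIntSubmodule Λ
  haveI hdisc : DiscreteTopology Lz := inferInstanceAs (DiscreteTopology Λ)
  haveI : IsZLattice ℝ Lz := ⟨by rw [hLzcoe, hspan]⟩
  haveI : Module.Finite ℤ Lz := inferInstance
  haveI : Module.Free ℤ Lz := inferInstance
  -- dimension counts
  have hfrE : Module.finrank ℝ (Fin n → ℂ) = 2 * n := by
    rw [Module.finrank_pi_fintype ℝ]
    simp [Complex.finrank_real_complex, mul_comm]
  have hfrF : Module.finrank ℝ (Fin m → ℂ) = 2 * m := by
    rw [Module.finrank_pi_fintype ℝ]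
    simp [Complex.finrank_real_complex, mul_comm]
  have hrankL : Module.finrank ℤ Lz = 2 * n := by rw [ZLattice.rank ℝ, hfrE]
  have hfrV : Module.finrank ℝ (V.restrictScalars ℝ) = 2 * (n - m) := by
    have h2 : Module.finrank ℝ ℂ * Module.finrank ℂ V = Module.finrank ℝ V :=
      Module.finrank_mul_finrank ℝ ℂ V
    rw [hdim, Complex.finrank_real_complex] at h2
    exact h2.symm ▸ rfl
  -- Smith normal form
  set b := Module.Free.chooseBasis ℤ Lz with hb
  set N : Submodule ℤ Lz := (V.restrictScalars ℤ).comap Lz.subtype with hN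
  obtain ⟨r, snf⟩ := N.smithNormalForm b
  set u : Module.Free.ChooseBasisIndex ℤ Lz → (Fin n → ℂ) :=
    fun i => ((snf.bM i : Lz) : Fin n → ℂ) with hu
  set c : Module.Free.ChooseBasisIndex ℤ Lz → (Fin m → ℂ) := fun i => f (u i) with hc
  have hcardι : Fintype.card (Module.Free.ChooseBasisIndex ℤ Lz) = 2 * n := by
    rw [← Module.finrank_eq_card_chooseBasisIndex, hrankL]
  -- F1 : span of u is Lz
  have hF1 : span ℤ (Set.range u) = Lz := by
    have h := congrArg (Submodule.map Lz.subtype) snf.bM.span_eq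
    rwa [Submodule.map_span, Submodule.map_top, Submodule.range_subtype, ← Set.range_comp] at h
  -- F2 : the image subgroup as a ℤ-span
  have hF2 : ((Λ.map f.toAddMonoidHom : AddSubgroup (Fin m → ℂ)) : Set (Fin m → ℂ))
      = (span ℤ (Set.range c) : Set (Fin m → ℂ)) := by
    have h : span ℤ (Set.range c)
        = Submodule.map (f.restrictScalars ℤ) (span ℤ (Set.range u)) := by
      rw [Submodule.map_span, ← Set.range_comp]
      rfl
    rw [h, hF1]
    ext x
    constructor
    · rintro ⟨y, hy, rfl⟩
      exact ⟨y, hy, rfl⟩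
    · rintro ⟨y, hy, rfl⟩
      exact ⟨y, hy, rfl⟩
  -- F3 : c vanishes on the range of snf.f
  have hF3 : ∀ j : Fin r, c (snf.f j) = 0 := by
    intro j
    have hmemN : (snf.bN j : Lz) ∈ N := (snf.bN j).2
    have hmemV : ((snf.bN j : Lz) : Fin n → ℂ) ∈ V := hmemN
    have hco : ((snf.bN j : Lz) : Fin n → ℂ) = (snf.a j : ℤ) • u (snf.f j) := by
      rw [snf.snf j]
      rfl
    have haj : snf.a j ≠ 0 := by
      intro h0
      refine snf.bN.ne_zero j (Subtype.coe_injective ?_)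
      show ((snf.bN j : N) : ↥Lz) = ((0 : N) : ↥Lz)
      rw [snf.snf j, h0, zero_smul]
      rfl
    have hker0 : f ((snf.a j : ℤ) • u (snf.f j)) = 0 := by
      rw [← hco]
      have : ((snf.bN j : Lz) : Fin n → ℂ) ∈ LinearMap.ker f := by rw [hker]; exact hmemV
      exact this
    rw [map_zsmul] at hker0
    rcases smul_eq_zero.mp hker0 with h | h
    · exact absurd h haj
    · exact h
  -- the complementary index set
  have hcard' : Fintype.card {i // i ∉ Set.range snf.f} = 2 * n - r := by
    rw [Fintype.card_subtype_compl]
    have : Fintype.card {i // i ∈ Set.range snf.f} = r := by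
      rw [Fintype.card_congr (Equiv.ofInjective _ snf.f.injective).symm, Fintype.card_fin]
    rw [this, hcardι]
  -- spans over ℝ
  have hspanu : span ℝ (Set.range u) = ⊤ := by
    rw [eq_top_iff, ← hspan, Submodule.span_le]
    intro x hx
    have hx' : x ∈ Lz := by rw [← SetLike.mem_coe, hLzcoe]; exact hx
    rw [← hF1] at hx'
    exact Submodule.span_subset_span ℤ ℝ _ hx'
  have hspanc : span ℝ (Set.range c) = ⊤ := by
    have h : Set.range c = ⇑(f.restrictScalars ℝ) '' Set.range u := by
      rw [← Set.range_comp]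
      rfl
    rw [h, Submodule.span_image, hspanu, Submodule.map_top, LinearMap.range_eq_top]
    exact hsurj
  have hsubc : Set.range c ⊆ Set.range (fun i : {i // i ∉ Set.range snf.f} => c i.1) ∪ {0} := by
    rintro x ⟨i, rfl⟩
    by_cases h : i ∈ Set.range snf.f
    · obtain ⟨j, rfl⟩ := h
      right
      simp [hF3 j]
    · exact Or.inl ⟨⟨i, h⟩, rfl⟩
  have hzero : ({0} : Set (Fin m → ℂ)) ⊆ Set.range (fun i : {i // i ∉ Set.range snf.f} => c i.1) ∪ {0} :=
    Set.subset_union_right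
  have hspanc' : span ℝ (Set.range fun i : {i // i ∉ Set.range snf.f} => c i.1) = ⊤ := by
    rw [eq_top_iff, ← hspanc]
    refine (Submodule.span_le.mpr ?_)
    intro x hx
    rcases hsubc hx with h | h
    · exact Submodule.subset_span h
    · simp only [Set.mem_singleton_iff] at h
      simp [h]
  have hspanz : span ℤ (Set.range c) = span ℤ (Set.range fun i : {i // i ∉ Set.range snf.f} => c i.1) := by
    refine le_antisymm ?_ ?_
    · refine Submodule.span_le.mpr ?_
      intro x hx
      rcases hsubc hx with h | h
      · exact Submodule.subset_span h
      · simp only [Set.mem_singleton_iff] at h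
        simp [h]
    · refine Submodule.span_mono ?_
      rintro x ⟨i, rfl⟩
      exact ⟨i.1, rfl⟩
  -- card bound 1 : 2m ≤ card ι'
  have h1 : 2 * m ≤ Fintype.card {i // i ∉ Set.range snf.f} := by
    have hle : Module.finrank ℝ (span ℝ (Set.range fun i : {i // i ∉ Set.range snf.f} => c i.1))
        ≤ Fintype.card {i // i ∉ Set.range snf.f} := by
      refine (finrank_span_le_card _).trans ?_
      rw [Set.toFinset_range]
      exact le_trans Finset.card_image_le (le_of_eq Finset.card_univ)
    rw [hspanc', finrank_top, hfrF] at hle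
    exact hle
  -- card bound 2 : 2(n-m) ≤ r
  have hVle : (V.restrictScalars ℝ : Submodule ℝ (Fin n → ℂ))
      ≤ span ℝ (Set.range fun j : Fin r => ((snf.bN j : ↥Lz) : Fin n → ℂ)) := by
    rw [← hQ, Submodule.span_le]
    rintro x ⟨hxV, hxQ⟩
    obtain ⟨e, he, hex⟩ := aux_denom _ hxQ
    have hdLz : e • x ∈ Lz := by
      have : span ℤ (Λ : Set (Fin n → ℂ)) = Lz := by
        rw [← hLzcoe, Submodule.span_eq]
      rw [← this]
      exact hex
    have hdV : (⟨e • x, hdLz⟩ : ↥Lz) ∈ N := by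
      have : e • x ∈ V := by
        have := Submodule.smul_mem (V.restrictScalars ℤ) e (by exact hxV : x ∈ V.restrictScalars ℤ)
        exact this
      exact this
    have hmap : span ℤ (Set.range fun j : Fin r => ((snf.bN j : ↥Lz) : Fin n → ℂ))
        = Submodule.map (Lz.subtype.comp N.subtype) (span ℤ (Set.range snf.bN)) := by
      rw [Submodule.map_span, ← Set.range_comp]
      rfl
    have hmem : e • x ∈ span ℤ (Set.range fun j : Fin r => ((snf.bN j : ↥Lz) : Fin n → ℂ)) := by
      rw [hmap]
      exact ⟨⟨⟨e • x, hdLz⟩, hdV⟩, by rw [snf.bN.span_eq]; trivial, rfl⟩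
    have hmem' : (e : ℝ) • x ∈ span ℝ (Set.range fun j : Fin r => ((snf.bN j : ↥Lz) : Fin n → ℂ)) := by
      rw [Int.cast_smul_eq_zsmul]
      exact Submodule.span_subset_span ℤ ℝ _ hmem
    have := Submodule.smul_mem _ ((e : ℝ)⁻¹) hmem'
    rwa [inv_smul_smul₀ (by exact_mod_cast he)] at this
  have h2 : 2 * (n - m) ≤ r := by
    have hle : Module.finrank ℝ (V.restrictScalars ℝ)
        ≤ Module.finrank ℝ (span ℝ (Set.range fun j : Fin r => ((snf.bN j : ↥Lz) : Fin n → ℂ))) :=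
      Submodule.finrank_mono hVle
    have hle2 : Module.finrank ℝ (span ℝ (Set.range fun j : Fin r => ((snf.bN j : ↥Lz) : Fin n → ℂ)))
        ≤ r := by
      refine (finrank_span_le_card _).trans ?_
      rw [Set.toFinset_range]
      exact le_trans Finset.card_image_le (le_of_eq (by simp))
    rw [hfrV] at hle
    exact hle.trans hle2
  rw [hcard'] at h1
  have hcardeq : Fintype.card {i // i ∉ Set.range snf.f} = 2 * m := by
    rw [hcard']
    omega
  -- the basis of ℂᵐ over ℝ given by the surviving images
  have htop : ⊤ ≤ span ℝ (Set.range fun i : {i // i ∉ Set.range snf.f} => c i.1) := hspanc'.ge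
  set d : Module.Basis {i // i ∉ Set.range snf.f} ℝ (Fin m → ℂ) :=
    basisOfTopLeSpanOfCardEqFinrank (fun i : {i // i ∉ Set.range snf.f} => c i.1) htop
      (by rw [hcardeq, hfrF]) with hd
  have hdc : ⇑d = fun i : {i // i ∉ Set.range snf.f} => c i.1 :=
    coe_basisOfTopLeSpanOfCardEqFinrank _ _ _
  constructor
  · haveI hdisc2 : DiscreteTopology ↥(span ℤ (Set.range ⇑d)) := inferInstance
    refine DiscreteTopology.of_subset (s := (span ℤ (Set.range ⇑d) : Set (Fin m → ℂ))) hdisc2 ?_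
    rw [hF2, hdc, ← hspanz]
  · have h : ((Λ.map f.toAddMonoidHom : AddSubgroup (Fin m → ℂ)) : Set (Fin m → ℂ))
        = ⇑(f.restrictScalars ℝ) '' (Λ : Set (Fin n → ℂ)) := by
      ext x
      constructor
      · rintro ⟨y, hy, rfl⟩
        exact ⟨y, hy, rfl⟩
      · rintro ⟨y, hy, rfl⟩
        exact ⟨y, hy, rfl⟩
    rw [h, Submodule.span_image, hspan, Submodule.map_top, LinearMap.range_eq_top]
    exact hsurj

/-- Let `Λ` be a full-rank lattice in `ℂⁿ` and `H` a positive semidefinite Hermitian matrix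
whose kernel `V = {v : Hv = 0}` has complex dimension `n - m` with `m < n`, and assume `V` is
`ℚ`-defined modulo `Λ`, i.e. `V` is spanned over `ℝ` by `V ∩ span_ℚ(Λ)`. Then there exist a
surjective `ℂ`-linear map `f : ℂⁿ → ℂᵐ` with kernel exactly `V` such that `f(Λ)` is a
full-rank lattice in `ℂᵐ`, and a positive definite Hermitian `m×m` matrix `H'` with
`x*Hx = (f x)*H'(f x)` for all `x`, i.e. `H` is the pullback of `H'` under `f`. -/
theorem semidefinite_with_rational_kernel_is_pullback
    (n m : ℕ) (hm : m < n)
    (Λ : AddSubgroup (Fin n → ℂ)) [DiscreteTopology Λ]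
    (hspan : Submodule.span ℝ (Λ : Set (Fin n → ℂ)) = ⊤)
    (H : Matrix (Fin n) (Fin n) ℂ) (hH : H.PosSemidef)
    (V : Submodule ℂ (Fin n → ℂ)) (hV : V = LinearMap.ker H.mulVecLin)
    (hdim : Module.finrank ℂ V = n - m)
    (hQ : Submodule.span ℝ ((V : Set (Fin n → ℂ)) ∩
        (Submodule.span ℚ (Λ : Set (Fin n → ℂ)) : Set (Fin n → ℂ)))
      = V.restrictScalars ℝ) :
    ∃ f : (Fin n → ℂ) →ₗ[ℂ] (Fin m → ℂ),
      Function.Surjective f ∧ LinearMap.ker f = V ∧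
      DiscreteTopology ↥(Λ.map f.toAddMonoidHom) ∧
      Submodule.span ℝ ((Λ.map f.toAddMonoidHom : AddSubgroup (Fin m → ℂ)) : Set (Fin m → ℂ)) = ⊤ ∧
      ∃ H' : Matrix (Fin m) (Fin m) ℂ, H'.PosDef ∧
        ∀ x : Fin n → ℂ, star x ⬝ᵥ H *ᵥ x = star (f x) ⬝ᵥ H' *ᵥ (f x) := by
  -- construct the linear map `f`
  have hq : Module.finrank ℂ ((Fin n → ℂ) ⧸ V) = m := by
    have h := Submodule.finrank_quotient_add_finrank V
    rw [hdim, Module.finrank_pi] at h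
    simp only [Fintype.card_fin] at h
    omega
  have e : ((Fin n → ℂ) ⧸ V) ≃ₗ[ℂ] (Fin m → ℂ) :=
    LinearEquiv.ofFinrankEq _ _ (by rw [hq, Module.finrank_pi, Fintype.card_fin])
  set f : (Fin n → ℂ) →ₗ[ℂ] (Fin m → ℂ) := e.toLinearMap ∘ₗ V.mkQ with hf
  have hsurj : Function.Surjective f := e.surjective.comp (Submodule.mkQ_surjective V)
  have hker : LinearMap.ker f = V := by
    rw [hf, LinearMap.ker_comp, LinearEquiv.ker, Submodule.comap_bot, Submodule.ker_mkQ]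
  obtain ⟨hdisc, hspan'⟩ := aux_lattice n m hm Λ hspan V hdim hQ f hsurj hker
  refine ⟨f, hsurj, hker, hdisc, hspan', ?_⟩
  -- construct the matrix `H'`
  obtain ⟨g, hg⟩ := f.exists_rightInverse_of_surjective (LinearMap.range_eq_top.2 hsurj)
  have hfg : ∀ y, f (g y) = y := fun y => by
    have := LinearMap.congr_fun hg y
    simpa using this
  set G : Matrix (Fin n) (Fin m) ℂ := LinearMap.toMatrix' g with hGdef
  have hG : ∀ y, G *ᵥ y = g y := fun y => by
    rw [← Matrix.toLin'_apply, hGdef, Matrix.toLin'_toMatrix']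
  have key : ∀ (y : Fin m → ℂ), star y ⬝ᵥ (Gᴴ * H * G) *ᵥ y
      = star (G *ᵥ y) ⬝ᵥ H *ᵥ (G *ᵥ y) := by
    intro y
    rw [Matrix.mul_assoc, ← Matrix.mulVec_mulVec, dotProduct_mulVec, ← star_mulVec,
      ← Matrix.mulVec_mulVec]
  have hpsd : (Gᴴ * H * G).PosSemidef := hH.conjTranspose_mul_mul_same G
  refine ⟨Gᴴ * H * G, Matrix.PosDef.of_dotProduct_mulVec_pos hpsd.1 (fun y hy => ?_), fun x => ?_⟩
  · refine lt_of_le_of_ne (hpsd.dotProduct_mulVec_nonneg y) fun h0 => hy ?_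
    have hz : H *ᵥ (G *ᵥ y) = 0 := by
      rw [← hH.dotProduct_mulVec_zero_iff, ← key, ← h0]
    have hmem : g y ∈ V := by
      rw [hV]
      simpa [Matrix.mulVecLin, hG] using hz
    rw [← hker, LinearMap.mem_ker] at hmem
    rw [← hfg y, hmem]
  · have hw : H *ᵥ (x - g (f x)) = 0 := by
      have : x - g (f x) ∈ V := by
        rw [← hker, LinearMap.mem_ker]
        simp [hfg]
      rw [hV, LinearMap.mem_ker] at this
      simpa [Matrix.mulVecLin] using this
    have := aux_quad H hH.1 (g (f x)) (x - g (f x)) hw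
    rw [add_sub_cancel] at this
    rw [this, key, hG]
end

section
/- Let Λ be a full-rank lattice in ℂⁿ, let f : ℂⁿ → ℂᵐ be a surjective ℂ-linear map such that Λ' := f(Λ) is a full-rank lattice in ℂᵐ, and let H' be a positive definite Hermitian m×m matrix; set H := the pullback of H' by f, i.e. x*Hx = (f x)*H'(f x). Let I denote the n×n identity matrix. Then: (1) for all x, y ∈ ℂⁿ, the flat pseudodistance satisfies d_H(x̄, ȳ) = d_{H'}(f(x), f(y)), where d_{H'} is the flat distance on ℂᵐ⧸Λ'; and (2) as t → 0⁺ the flat distances of the positive definite matrices H + tI converge uniformly to d_H: for every ε > 0 there is t₀ > 0 such that for all 0 < t < t₀ and all x, y ∈ ℂⁿ one has |d_{H+tI}(x̄, ȳ) − d_H(x̄, ȳ)| < ε. -/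
open Matrix
open scoped ComplexOrder

open scoped MatrixOrder in
noncomputable def Matrix.PosSemidef.sqrt {k : ℕ} {M : Matrix (Fin k) (Fin k) ℂ}
    (_ : M.PosSemidef) : Matrix (Fin k) (Fin k) ℂ := CFC.sqrt M

open scoped MatrixOrder in
lemma Matrix.PosSemidef.sqrt_mul_self {k : ℕ} {M : Matrix (Fin k) (Fin k) ℂ}
    (hM : M.PosSemidef) : hM.sqrt * hM.sqrt = M := CFC.sqrt_mul_sqrt_self M hM.nonneg

open scoped MatrixOrder in
lemma Matrix.PosSemidef.posSemidef_sqrt {k : ℕ} {M : Matrix (Fin k) (Fin k) ℂ}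
    (hM : M.PosSemidef) : hM.sqrt.PosSemidef := (CFC.sqrt_nonneg M).posSemidef

namespace FlatAux

variable {k : ℕ}

/-- The (real part of the) quadratic form of a matrix. -/
noncomputable def qf (M : Matrix (Fin k) (Fin k) ℂ) (v : Fin k → ℂ) : ℝ :=
  (star v ⬝ᵥ M *ᵥ v).re

/-- The seminorm induced by a PSD matrix. -/
noncomputable def sn (M : Matrix (Fin k) (Fin k) ℂ) (v : Fin k → ℂ) : ℝ :=
  Real.sqrt (qf M v)

lemma sn_nonneg (M : Matrix (Fin k) (Fin k) ℂ) (v : Fin k → ℂ) : 0 ≤ sn M v :=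
  Real.sqrt_nonneg _

lemma sqrt_add_le {a b : ℝ} (ha : 0 ≤ a) (hb : 0 ≤ b) :
    Real.sqrt (a + b) ≤ Real.sqrt a + Real.sqrt b := by
  rw [show a + b = (Real.sqrt a)^2 + (Real.sqrt b)^2 by
    rw [Real.sq_sqrt ha, Real.sq_sqrt hb]]
  refine (Real.sqrt_le_sqrt ?_).trans (le_of_eq (Real.sqrt_sq (by positivity)))
  ring_nf
  nlinarith [Real.sqrt_nonneg a, Real.sqrt_nonneg b]

lemma quad_factor {M : Matrix (Fin k) (Fin k) ℂ} (hM : M.PosSemidef) (v : Fin k → ℂ) :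
    star v ⬝ᵥ M *ᵥ v = star (hM.sqrt *ᵥ v) ⬝ᵥ (hM.sqrt *ᵥ v) := by
  conv_lhs => rw [← hM.sqrt_mul_self]
  rw [← mulVec_mulVec, star_mulVec, dotProduct_mulVec,
    hM.posSemidef_sqrt.isHermitian.eq]

lemma sn_eq_norm {M : Matrix (Fin k) (Fin k) ℂ} (hM : M.PosSemidef) (v : Fin k → ℂ) :
    sn M v = ‖(WithLp.equiv 2 (Fin k → ℂ)).symm (hM.sqrt *ᵥ v)‖ := by
  rw [sn, qf, quad_factor hM, EuclideanSpace.norm_eq]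
  congr 1
  rw [dotProduct, Complex.re_sum]
  refine Finset.sum_congr rfl fun i _ => ?_
  simp [Pi.star_apply, Complex.star_def, Complex.mul_re, Complex.sq_norm,
    Complex.normSq_apply]

lemma sn_triangle {M : Matrix (Fin k) (Fin k) ℂ} (hM : M.PosSemidef) (u w : Fin k → ℂ) :
    sn M (u + w) ≤ sn M u + sn M w := by
  rw [sn_eq_norm hM, sn_eq_norm hM, sn_eq_norm hM, mulVec_add, WithLp.equiv_symm_apply, WithLp.toLp_add]
  exact norm_add_le _ _

lemma sn_neg (M : Matrix (Fin k) (Fin k) ℂ) (v : Fin k → ℂ) : sn M (-v) = sn M v := by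
  simp [sn, qf, mulVec_neg]

lemma qf_nonneg {M : Matrix (Fin k) (Fin k) ℂ} (hM : M.PosSemidef) (v : Fin k → ℂ) :
    0 ≤ qf M v :=
  hM.re_dotProduct_nonneg v

lemma qf_smul_one (t : ℝ) (v : Fin k → ℂ) :
    qf ((t : ℂ) • 1) v = t * (star v ⬝ᵥ v).re := by
  rw [qf, smul_mulVec, one_mulVec, dotProduct_smul]
  simp [Complex.smul_re]

lemma qf_add (M N : Matrix (Fin k) (Fin k) ℂ) (v : Fin k → ℂ) :
    qf (M + N) v = qf M v + qf N v := by
  rw [qf, add_mulVec, dotProduct_add, Complex.add_re]; rfl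

lemma pn_nonneg (v : Fin k → ℂ) : 0 ≤ (star v ⬝ᵥ v).re := by
  have := dotProduct_star_self_nonneg v
  exact (Complex.le_def.mp this).1

lemma smul_one_posSemidef {t : ℝ} (ht : 0 ≤ t) :
    (((t : ℂ) • 1 : Matrix (Fin k) (Fin k) ℂ)).PosSemidef := by
  rw [posSemidef_iff_dotProduct_mulVec]
  constructor
  · rw [IsHermitian, conjTranspose_smul, conjTranspose_one, Complex.star_def,
      Complex.conj_ofReal]
  · intro v
    rw [smul_mulVec, one_mulVec, dotProduct_smul, smul_eq_mul]
    exact mul_nonneg (Complex.zero_le_real.mpr ht) (dotProduct_star_self_nonneg v)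

/-- Bound of the quadratic form by the sup norm. -/
lemma qf_le (M : Matrix (Fin k) (Fin k) ℂ) (v : Fin k → ℂ) :
    qf M v ≤ (∑ i, ∑ j, ‖M i j‖) * ‖v‖ ^ 2 := by
  have h1 : qf M v ≤ ‖star v ⬝ᵥ M *ᵥ v‖ := Complex.re_le_norm _
  refine h1.trans ?_
  rw [dotProduct]
  refine (norm_sum_le _ _).trans ?_
  rw [Finset.sum_mul]
  refine Finset.sum_le_sum fun i _ => ?_
  rw [norm_mul, mulVec, dotProduct, Finset.sum_mul]
  have hvi : ‖(star v) i‖ ≤ ‖v‖ := by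
    simpa using norm_le_pi_norm v i
  calc ‖(star v) i‖ * ‖∑ j, M i j * v j‖
      ≤ ‖v‖ * ∑ j, ‖M i j‖ * ‖v‖ := by
        refine mul_le_mul hvi ((norm_sum_le _ _).trans ?_) (norm_nonneg _) (norm_nonneg _)
        refine Finset.sum_le_sum fun j _ => ?_
        rw [norm_mul]
        exact mul_le_mul_of_nonneg_left (norm_le_pi_norm v j) (norm_nonneg _)
    _ = ∑ j, ‖M i j‖ * ‖v‖ ^ 2 := by
        rw [Finset.mul_sum]; exact Finset.sum_congr rfl fun j _ => by ring

/-- The flat pseudodistance as a function of a single variable. -/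
noncomputable def gd (Λ : AddSubgroup (Fin k → ℂ)) (M : Matrix (Fin k) (Fin k) ℂ)
    (z : Fin k → ℂ) : ℝ :=
  ⨅ l : Λ, sn M (z - l)

variable {Λ : AddSubgroup (Fin k → ℂ)} {M M' : Matrix (Fin k) (Fin k) ℂ} {z : Fin k → ℂ}

lemma gd_bdd : BddBelow (Set.range fun l : Λ => sn M (z - l)) :=
  ⟨0, by rintro _ ⟨l, rfl⟩; exact sn_nonneg _ _⟩

lemma gd_le (l : Λ) : gd Λ M z ≤ sn M (z - l) := ciInf_le gd_bdd l

lemma le_gd {c : ℝ} (h : ∀ l : Λ, c ≤ sn M (z - l)) : c ≤ gd Λ M z := le_ciInf h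

lemma gd_nonneg : 0 ≤ gd Λ M z := le_gd fun l => sn_nonneg _ _

lemma gd_mono (h : ∀ v, qf M v ≤ qf M' v) : gd Λ M z ≤ gd Λ M' z :=
  le_gd fun l => (gd_le l).trans (Real.sqrt_le_sqrt (h _))

lemma gd_periodic (l₀ : Λ) : gd Λ M (z - l₀) = gd Λ M z := by
  refine le_antisymm (le_gd fun l => ?_) (le_gd fun l => ?_)
  · have := gd_le (Λ := Λ) (M := M) (z := z - l₀) (l - l₀)
    refine this.trans_eq ?_
    congr 1
    push_cast
    abel
  · have := gd_le (Λ := Λ) (M := M) (z := z) (l + l₀)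
    refine this.trans_eq ?_
    congr 1
    push_cast
    abel

lemma gd_lipschitz (hM : M.PosSemidef) (a b : Fin k → ℂ) :
    |gd Λ M a - gd Λ M b| ≤ sn M (a - b) := by
  have key : ∀ a b : Fin k → ℂ, gd Λ M a - gd Λ M b ≤ sn M (a - b) := by
    intro a b
    rw [sub_le_iff_le_add]
    have h2 : gd Λ M a - sn M (a - b) ≤ gd Λ M b := by
      refine le_gd fun l => ?_
      rw [sub_le_iff_le_add]
      have hab : a - l = (b - l) + (a - b) := by abel
      calc gd Λ M a ≤ sn M (a - l) := gd_le l
        _ ≤ sn M (b - l) + sn M (a - b) := by rw [hab]; exact sn_triangle hM _ _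
    linarith
  rw [abs_sub_le_iff]
  refine ⟨key a b, (key b a).trans_eq ?_⟩
  rw [← sn_neg M (b - a), neg_sub]

lemma iInf_comp_surj {ι ι' : Sort*} {e : ι → ι'} (he : Function.Surjective e)
    (F : ι' → ℝ) : ⨅ i, F (e i) = ⨅ j, F j := by
  rw [iInf, iInf]
  congr 1
  exact he.range_comp F

lemma covering (Λ : AddSubgroup (Fin k → ℂ))
    (hspan : Submodule.span ℝ (Λ : Set (Fin k → ℂ)) = ⊤) :
    ∃ R : ℝ, 0 < R ∧ ∀ z : Fin k → ℂ, ∃ l ∈ Λ, ‖z - l‖ ≤ R := by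
  obtain ⟨b, hb_sub, hb_span, hb_li⟩ := exists_linearIndependent ℝ (Λ : Set (Fin k → ℂ))
  rw [hspan] at hb_span
  have hb_fin : b.Finite := hb_li.setFinite
  haveI := hb_fin.fintype
  let B : Module.Basis b ℝ (Fin k → ℂ) := Module.Basis.mk hb_li
    (by rw [Subtype.range_coe, hb_span])
  refine ⟨(∑ i : b, ‖(i : Fin k → ℂ)‖) + 1, by positivity, fun z => ?_⟩
  set c : b → ℝ := fun i => B.repr z i with hc
  refine ⟨∑ i : b, ⌊c i⌋ • (i : Fin k → ℂ),
    AddSubgroup.sum_mem Λ fun i _ => AddSubgroup.zsmul_mem Λ (hb_sub i.2) _, ?_⟩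
  have hz : z = ∑ i : b, c i • (B i) := (B.sum_repr z).symm
  have hBi : ∀ i : b, B i = (i : Fin k → ℂ) := fun i => by simp [B]
  have hdiff : z - (∑ i : b, ⌊c i⌋ • (i : Fin k → ℂ))
      = ∑ i : b, Int.fract (c i) • (i : Fin k → ℂ) := by
    rw [hz, ← Finset.sum_sub_distrib]
    refine Finset.sum_congr rfl fun i _ => ?_
    rw [hBi i, Int.fract, sub_smul, ← Int.cast_smul_eq_zsmul ℝ]
  rw [hdiff]
  calc ‖∑ i : b, Int.fract (c i) • (i : Fin k → ℂ)‖
      ≤ ∑ i : b, ‖Int.fract (c i) • (i : Fin k → ℂ)‖ := norm_sum_le _ _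
    _ ≤ ∑ i : b, ‖(i : Fin k → ℂ)‖ := by
        refine Finset.sum_le_sum fun i _ => ?_
        rw [norm_smul, Real.norm_eq_abs,
          abs_of_nonneg (Int.fract_nonneg _)]
        exact mul_le_of_le_one_left (norm_nonneg _) (Int.fract_lt_one _).le
    _ ≤ _ := by linarith

end FlatAux

/-- The flat pseudodistance on the torus `ℂᵏ⧸Λ` induced by a (semi)definite Hermitian matrix
`H`: `d_H(x̄, ȳ) = inf_{λ ∈ Λ} √((x−y−λ)*H(x−y−λ))`, expressed on representatives. -/
noncomputable def flatDist {k : ℕ} (Λ : AddSubgroup (Fin k → ℂ))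
    (H : Matrix (Fin k) (Fin k) ℂ) (x y : Fin k → ℂ) : ℝ :=
  ⨅ l : Λ, Real.sqrt ((star (x - y - (l : Fin k → ℂ)) ⬝ᵥ H *ᵥ (x - y - (l : Fin k → ℂ))).re)

lemma flatDist_eq_gd {k : ℕ} (Λ : AddSubgroup (Fin k → ℂ))
    (H : Matrix (Fin k) (Fin k) ℂ) (x y : Fin k → ℂ) :
    flatDist Λ H x y = FlatAux.gd Λ H (x - y) := rfl

/-- Let `Λ` be a full-rank lattice in `ℂⁿ`, `f : ℂⁿ → ℂᵐ` a surjective linear map (given by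
the matrix `A`) such that `Λ' := f(Λ)` is a full-rank lattice in `ℂᵐ`, and `H'` a positive
definite Hermitian `m×m` matrix; let `H := Aᴴ H' A` be the pullback of `H'` by `f` (so that
`x*Hx = (f x)*H'(f x)`). Then (1) the flat pseudodistance satisfies
`d_H(x̄,ȳ) = d_{H'}(f x, f y)`, and (2) as `t → 0⁺` the flat distances of the positive
definite matrices `H + t·I` converge uniformly to `d_H`. -/
theorem flat_metrics_collapse_to_pullback
    (n m : ℕ) (Λ : AddSubgroup (Fin n → ℂ)) [DiscreteTopology Λ]
    (hspan : Submodule.span ℝ (Λ : Set (Fin n → ℂ)) = ⊤)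
    (A : Matrix (Fin m) (Fin n) ℂ) (hsurj : Function.Surjective A.mulVecLin)
    [DiscreteTopology ↥(Λ.map A.mulVecLin.toAddMonoidHom)]
    (hspan' : Submodule.span ℝ
      ((Λ.map A.mulVecLin.toAddMonoidHom : AddSubgroup (Fin m → ℂ)) : Set (Fin m → ℂ)) = ⊤)
    (H' : Matrix (Fin m) (Fin m) ℂ) (hH' : H'.PosDef) :
    (∀ x y : Fin n → ℂ,
      flatDist Λ (Aᴴ * H' * A) x y
        = flatDist (Λ.map A.mulVecLin.toAddMonoidHom) H' (A *ᵥ x) (A *ᵥ y)) ∧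
    (∀ ε : ℝ, 0 < ε → ∃ t₀ : ℝ, 0 < t₀ ∧ ∀ t : ℝ, 0 < t → t < t₀ → ∀ x y : Fin n → ℂ,
      |flatDist Λ (Aᴴ * H' * A + (t : ℂ) • 1) x y - flatDist Λ (Aᴴ * H' * A) x y| < ε) := by
  haveI : Nonempty Λ := ⟨0⟩
  set H₀ : Matrix (Fin n) (Fin n) ℂ := Aᴴ * H' * A with hH₀
  have hPSD0 : H₀.PosSemidef := hH'.posSemidef.conjTranspose_mul_mul_same A
  constructor
  · -- Part 1
    intro x y
    set Λ' := Λ.map A.mulVecLin.toAddMonoidHom with hΛ'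
    set F : (Fin m → ℂ) → ℝ := fun w =>
      Real.sqrt ((star (A *ᵥ x - A *ᵥ y - w) ⬝ᵥ H' *ᵥ (A *ᵥ x - A *ᵥ y - w)).re) with hF
    have key : ∀ v : Fin n → ℂ,
        star v ⬝ᵥ H₀ *ᵥ v = star (A *ᵥ v) ⬝ᵥ H' *ᵥ (A *ᵥ v) := by
      intro v
      simp only [hH₀, star_mulVec, dotProduct_mulVec, vecMul_vecMul, Matrix.mul_assoc]
    set e : Λ → Λ' := fun l => ⟨A *ᵥ (l : Fin n → ℂ), by
      exact AddSubgroup.mem_map_of_mem _ l.2⟩ with he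
    have hesurj : Function.Surjective e := by
      rintro ⟨w, hw⟩
      rw [AddSubgroup.mem_map] at hw
      obtain ⟨l, hl, rfl⟩ := hw
      exact ⟨⟨l, hl⟩, rfl⟩
    have step : flatDist Λ H₀ x y = ⨅ l : Λ, F (e l) := by
      rw [flatDist]
      refine iInf_congr fun l => ?_
      rw [hF]
      simp only
      rw [key (x - y - l), mulVec_sub, mulVec_sub]
    rw [step]
    exact FlatAux.iInf_comp_surj hesurj (fun l' : Λ' => F (l' : Fin m → ℂ))
  · -- Part 2
    intro ε hε
    set δ : ℝ := ε / 6 with hδdef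
    have hδ : 0 < δ := by positivity
    set Mt : ℝ → Matrix (Fin n) (Fin n) ℂ := fun t => H₀ + (t : ℂ) • 1 with hMt
    have hPSDt : ∀ t : ℝ, 0 ≤ t → (Mt t).PosSemidef := fun t ht =>
      hPSD0.add (FlatAux.smul_one_posSemidef ht)
    have hqf : ∀ (t : ℝ) v, FlatAux.qf (Mt t) v
        = FlatAux.qf H₀ v + t * (star v ⬝ᵥ v).re := fun t v => by
      rw [hMt]
      simp only
      rw [FlatAux.qf_add, FlatAux.qf_smul_one]
    -- Lipschitz constant
    set C1 : ℝ := ∑ i, ∑ j, ‖(Mt 1) i j‖ with hC1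
    have hC1nn : 0 ≤ C1 := Finset.sum_nonneg fun i _ =>
      Finset.sum_nonneg fun j _ => norm_nonneg _
    set L : ℝ := Real.sqrt C1 + 1 with hL
    have hLpos : 0 < L := by positivity
    have hsnle : ∀ t : ℝ, 0 ≤ t → t ≤ 1 → ∀ u : Fin n → ℂ,
        FlatAux.sn (Mt t) u ≤ L * ‖u‖ := by
      intro t ht ht1 u
      have h1 : FlatAux.qf (Mt t) u ≤ FlatAux.qf (Mt 1) u := by
        rw [hqf, hqf]
        have := FlatAux.pn_nonneg u
        nlinarith
      have h2 : FlatAux.qf (Mt 1) u ≤ C1 * ‖u‖ ^ 2 := FlatAux.qf_le _ u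
      calc FlatAux.sn (Mt t) u ≤ Real.sqrt (C1 * ‖u‖ ^ 2) :=
            Real.sqrt_le_sqrt (h1.trans h2)
        _ = Real.sqrt C1 * ‖u‖ := by
            rw [Real.sqrt_mul hC1nn, Real.sqrt_sq (norm_nonneg _)]
        _ ≤ L * ‖u‖ := by
            have := norm_nonneg u
            nlinarith [Real.sqrt_nonneg C1]
    have hsn0le : ∀ u : Fin n → ℂ, FlatAux.sn H₀ u ≤ L * ‖u‖ := by
      intro u
      have h1 : FlatAux.qf H₀ u ≤ FlatAux.qf (Mt 1) u := by
        rw [hqf]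
        have := FlatAux.pn_nonneg u
        nlinarith
      have h2 : FlatAux.qf (Mt 1) u ≤ C1 * ‖u‖ ^ 2 := FlatAux.qf_le _ u
      calc FlatAux.sn H₀ u ≤ Real.sqrt (C1 * ‖u‖ ^ 2) := Real.sqrt_le_sqrt (h1.trans h2)
        _ = Real.sqrt C1 * ‖u‖ := by
            rw [Real.sqrt_mul hC1nn, Real.sqrt_sq (norm_nonneg _)]
        _ ≤ L * ‖u‖ := by
            have := norm_nonneg u
            nlinarith [Real.sqrt_nonneg C1]
    -- pointwise choice of t, per base point
    have hex : ∀ z : Fin n → ℂ, ∃ t : ℝ, 0 < t ∧ t ≤ 1 ∧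
        FlatAux.gd Λ (Mt t) z < FlatAux.gd Λ H₀ z + 2 * δ := by
      intro z
      have hlt : FlatAux.gd Λ H₀ z < FlatAux.gd Λ H₀ z + δ := by linarith
      obtain ⟨l, hl⟩ := exists_lt_of_ciInf_lt hlt
      set v : Fin n → ℂ := z - l with hv
      set P : ℝ := (star v ⬝ᵥ v).re with hP
      have hPnn : 0 ≤ P := FlatAux.pn_nonneg v
      refine ⟨min 1 (δ ^ 2 / (P + 1)), by positivity, min_le_left _ _, ?_⟩
      have htP : min 1 (δ ^ 2 / (P + 1)) * P ≤ δ ^ 2 := by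
        have h1 : min 1 (δ ^ 2 / (P + 1)) ≤ δ ^ 2 / (P + 1) := min_le_right _ _
        have h2 : δ ^ 2 / (P + 1) * P ≤ δ ^ 2 := by
          rw [div_mul_eq_mul_div, div_le_iff₀ (by linarith)]
          nlinarith
        nlinarith [mul_le_mul_of_nonneg_right h1 hPnn]
      have htPnn : 0 ≤ min 1 (δ ^ 2 / (P + 1)) * P :=
        mul_nonneg (le_min zero_le_one (by positivity)) hPnn
      calc FlatAux.gd Λ (Mt (min 1 (δ ^ 2 / (P + 1)))) z
          ≤ FlatAux.sn (Mt (min 1 (δ ^ 2 / (P + 1)))) v := FlatAux.gd_le l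
        _ = Real.sqrt (FlatAux.qf H₀ v + min 1 (δ ^ 2 / (P + 1)) * P) := by
            rw [FlatAux.sn, hqf]
        _ ≤ Real.sqrt (FlatAux.qf H₀ v) + Real.sqrt (min 1 (δ ^ 2 / (P + 1)) * P) :=
            FlatAux.sqrt_add_le (FlatAux.qf_nonneg hPSD0 v) htPnn
        _ ≤ FlatAux.sn H₀ v + δ := by
            refine add_le_add le_rfl ?_
            calc Real.sqrt (min 1 (δ ^ 2 / (P + 1)) * P) ≤ Real.sqrt (δ ^ 2) :=
                  Real.sqrt_le_sqrt htP
              _ = δ := Real.sqrt_sq hδ.le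
        _ < FlatAux.gd Λ H₀ z + δ + δ := by
            have : FlatAux.sn H₀ v < FlatAux.gd Λ H₀ z + δ := hl
            linarith
        _ = FlatAux.gd Λ H₀ z + 2 * δ := by ring
    choose tf htf0 htf1 htfval using hex
    -- compactness
    obtain ⟨R, hR, hcov⟩ := FlatAux.covering Λ hspan
    set K : Set (Fin n → ℂ) := Metric.closedBall 0 R with hK
    have hKc : IsCompact K := isCompact_closedBall _ _
    have hcover : K ⊆ ⋃ z : Fin n → ℂ, Metric.ball z (δ / L) := fun w _ =>
      Set.mem_iUnion.2 ⟨w, Metric.mem_ball_self (by positivity)⟩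
    obtain ⟨s, hs⟩ := hKc.elim_finite_subcover (fun z => Metric.ball z (δ / L))
      (fun z => Metric.isOpen_ball) hcover
    have hsne : s.Nonempty := by
      have h0K : (0 : Fin n → ℂ) ∈ K := Metric.mem_closedBall_self hR.le
      obtain ⟨i, his, -⟩ := Set.mem_iUnion₂.mp (hs h0K)
      exact ⟨i, his⟩
    set t₀ : ℝ := s.inf' hsne tf with ht₀
    have ht₀pos : 0 < t₀ := by
      rw [ht₀, Finset.lt_inf'_iff]
      exact fun i _ => htf0 i
    refine ⟨t₀, ht₀pos, ?_⟩
    intro t ht htlt x y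
    set z : Fin n → ℂ := x - y with hz
    obtain ⟨lst, hlmem, hlnorm⟩ := hcov z
    set w : Fin n → ℂ := z - lst with hw
    have hwK : w ∈ K := by
      rw [hK, Metric.mem_closedBall, dist_zero_right]
      exact hlnorm
    obtain ⟨i, his, hwi⟩ := Set.mem_iUnion₂.mp (hs hwK)
    have hwi' : ‖w - i‖ < δ / L := by
      rw [← dist_eq_norm]
      exact hwi
    have hti : t ≤ tf i := le_of_lt (htlt.trans_le (Finset.inf'_le tf his))
    -- periodicity
    have hper1 : FlatAux.gd Λ (Mt t) z = FlatAux.gd Λ (Mt t) w :=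
      (FlatAux.gd_periodic (⟨lst, hlmem⟩ : Λ)).symm
    have hper2 : FlatAux.gd Λ H₀ z = FlatAux.gd Λ H₀ w :=
      (FlatAux.gd_periodic (⟨lst, hlmem⟩ : Λ)).symm
    -- lower bound
    have hlow : FlatAux.gd Λ H₀ w ≤ FlatAux.gd Λ (Mt t) w := by
      refine FlatAux.gd_mono fun v => ?_
      rw [hqf]
      have := FlatAux.pn_nonneg v
      nlinarith
    -- upper bound chain
    have ha1 : FlatAux.gd Λ (Mt t) w ≤ FlatAux.gd Λ (Mt (tf i)) w := by
      refine FlatAux.gd_mono fun v => ?_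
      rw [hqf, hqf]
      have := FlatAux.pn_nonneg v
      nlinarith
    have ha2 : FlatAux.gd Λ (Mt (tf i)) w
        ≤ FlatAux.gd Λ (Mt (tf i)) i + FlatAux.sn (Mt (tf i)) (w - i) := by
      have := FlatAux.gd_lipschitz (Λ := Λ) (hPSDt (tf i) (htf0 i).le) w i
      have h' := (abs_sub_le_iff.mp this).1
      linarith
    have ha3 : FlatAux.sn (Mt (tf i)) (w - i) ≤ L * ‖w - i‖ :=
      hsnle (tf i) (htf0 i).le (htf1 i) _
    have ha4 : L * ‖w - i‖ < δ := by
      have := mul_lt_mul_of_pos_left hwi' hLpos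
      rwa [mul_div_cancel₀ _ (ne_of_gt hLpos)] at this
    have ha5 : FlatAux.gd Λ (Mt (tf i)) i < FlatAux.gd Λ H₀ i + 2 * δ := htfval i
    have ha6 : FlatAux.gd Λ H₀ i ≤ FlatAux.gd Λ H₀ w + L * ‖w - i‖ := by
      have := FlatAux.gd_lipschitz (Λ := Λ) hPSD0 i w
      have h' := (abs_sub_le_iff.mp this).1
      have h'' : FlatAux.sn H₀ (i - w) ≤ L * ‖i - w‖ := hsn0le _
      rw [norm_sub_rev] at h''
      linarith
    have hup : FlatAux.gd Λ (Mt t) w < FlatAux.gd Λ H₀ w + 4 * δ := by linarith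
    have e1 : flatDist Λ (Aᴴ * H' * A + (t : ℂ) • 1) x y = FlatAux.gd Λ (Mt t) z := rfl
    have e2 : flatDist Λ (Aᴴ * H' * A) x y = FlatAux.gd Λ H₀ z := rfl
    rw [e1, e2, hper1, hper2, abs_of_nonneg (by linarith)]
    rw [hδdef] at hup
    linarith
end
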